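/- Suppose the basic assumption, (A1) and (A2) hold. Then for every x ∈ D(T^∞), the limit lim_{n→∞} ‖T_e^n x‖^{1/n} exists and equals sup{|z| : z ∈ closure of a(supp F x)}, in the extended nonnegative reals [0,∞]. -/

import Mathlib

open Filter
open scoped ENNReal Topology

noncomputable section

variable {X : Type*} [NormedAddCommGroup X] [NormedSpace ℂ X]

/-- `y` is the orbit of `x` under the partially defined operator `T` : `y n = T^n x`;
its existence witnesses `x ∈ D(T^∞)`. -/
def IsIterSeq (T : X →ₗ.[ℂ] X) (x : X) (y : ℕ → X) : Prop :=
  y 0 = x ∧ ∀ n : ℕ, ∃ hn : y n ∈ T.domain, T ⟨y n, hn⟩ = y (n + 1)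

lemma aux_rpow_tendsto (M : ℝ≥0∞) (h0 : M ≠ 0) (htop : M ≠ ⊤) :
    Tendsto (fun n : ℕ => M ^ (1 / (n : ℝ))) atTop (𝓝 1) := by
  have hx : 0 < M.toReal := ENNReal.toReal_pos h0 htop
  have h1 : Tendsto (fun n : ℕ => (1 / (n:ℝ))) atTop (𝓝 0) :=
    tendsto_one_div_atTop_nhds_zero_nat
  have h2 : Tendsto (fun t : ℝ => ENNReal.ofReal (M.toReal ^ t)) (𝓝 0) (𝓝 1) := by
    have hc : ContinuousAt (fun t : ℝ => M.toReal ^ t) 0 := Real.continuousAt_const_rpow hx.ne'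
    have := (ENNReal.continuous_ofReal.continuousAt).comp hc
    simpa [Real.rpow_zero, ContinuousAt, Function.comp_def] using this
  refine (h2.comp h1).congr fun n => ?_
  simp only [Function.comp]
  rw [← ENNReal.ofReal_rpow_of_pos hx, ENNReal.ofReal_toReal htop]

/-- Suppose the basic assumption (`F` linear, injective on the domain of `T_e`, diagonalising
`T_e` with eigenvalue function `a`), (A1) (coordinatewise continuity of `F` on the domain of
`T_e`) and (A2) (reconstruction of elements of the domain `D` of `T` by an absolutely
convergent series) hold. Then for every `x ∈ D(T^∞)` (with orbit `y n = T^n x = T_e^n x`),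
the limit `lim ‖T_e^n x‖^{1/n}` exists and equals
`sup {|z| : z ∈ closure (a (supp F x))}` in `[0,∞]`. -/
theorem stmt4 [CompleteSpace X] {Λ : Type*} [Nonempty Λ] {L : Λ → Type*}
    [∀ l, NormedAddCommGroup (L l)] [∀ l, NormedSpace ℂ (L l)]
    (T Te : X →ₗ.[ℂ] X) (hTTe : T ≤ Te)
    (F : X →ₗ[ℂ] ∀ l, L l) (hinj : Set.InjOn F (Te.domain : Set X))
    (a : Λ → ℂ)
    (hdiag : ∀ (x : Te.domain) (l : Λ), F (Te x) l = a l • F (x : X) l)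
    (hA1 : ∀ l : Λ, Continuous fun x : Te.domain => F (x : X) l)
    (G : ∀ l : Λ, L l →ₗ[ℂ] X) (hGD : ∀ (l : Λ) (v : L l), G l v ∈ T.domain)
    (hA2 : ∀ x : T.domain, Summable (fun l : Λ => ‖G l (F (x : X) l)‖) ∧
      HasSum (fun l : Λ => G l (F (x : X) l)) (x : X))
    (x : X) (y : ℕ → X) (hy : IsIterSeq T x y) :
    Filter.Tendsto (fun n : ℕ => (‖y n‖₊ : ℝ≥0∞) ^ (1 / (n : ℝ))) atTop
      (𝓝 (⨆ z ∈ closure (a '' {l : Λ | F x l ≠ 0}), (‖z‖₊ : ℝ≥0∞))) := by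
  -- basic orbit facts
  have hmem : ∀ n, y n ∈ T.domain := fun n => (hy.2 n).choose
  have hmemE : ∀ n, y n ∈ Te.domain := fun n => hTTe.1 (hmem n)
  have hstep : ∀ n, Te ⟨y n, hmemE n⟩ = y (n + 1) := by
    intro n
    have h1 : T ⟨y n, hmem n⟩ = y (n+1) := (hy.2 n).choose_spec
    have h2 : T ⟨y n, hmem n⟩ = Te ⟨y n, hmemE n⟩ := hTTe.2 rfl
    rw [← h2, h1]
  have hF : ∀ n l, F (y n) l = (a l)^n • F x l := by
    intro n
    induction n with
    | zero => intro l; simp [hy.1]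
    | succ n ih =>
      intro l
      rw [← hstep n, hdiag ⟨y n, hmemE n⟩ l, ih l, pow_succ, smul_smul, mul_comm]
  -- the set and the sup
  set S : Set Λ := {l : Λ | F x l ≠ 0} with hS
  set r : ℝ≥0∞ := ⨆ l ∈ S, (‖a l‖₊ : ℝ≥0∞) with hr
  have hsup : (⨆ z ∈ closure (a '' S), (‖z‖₊ : ℝ≥0∞)) = r := by
    apply le_antisymm
    · refine iSup₂_le fun z hz => ?_
      obtain ⟨u, hu, hulim⟩ := mem_closure_iff_seq_limit.1 hz
      have hten : Tendsto (fun k => (‖u k‖₊ : ℝ≥0∞)) atTop (𝓝 (‖z‖₊ : ℝ≥0∞)) :=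
        ((ENNReal.continuous_coe.comp continuous_nnnorm).tendsto z).comp hulim
      refine le_of_tendsto' hten fun k => ?_
      obtain ⟨l, hl, hlz⟩ := hu k
      exact hlz ▸ le_iSup₂ (f := fun l (_ : l ∈ S) => (‖a l‖₊ : ℝ≥0∞)) l hl
    · refine iSup₂_le fun l hl => ?_
      exact le_iSup₂ (f := fun z (_ : z ∈ closure (a '' S)) => (‖z‖₊ : ℝ≥0∞)) (a l)
        (subset_closure ⟨l, hl, rfl⟩)
  rw [hsup]
  -- summability facts
  have hsumN : ∀ n, Summable (fun l => ‖G l (F (y n) l)‖₊) := by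
    intro n
    rw [← NNReal.summable_coe]
    simpa using (hA2 ⟨y n, hmem n⟩).1
  set M : ℝ≥0∞ := ∑' l, (‖G l (F x l)‖₊ : ℝ≥0∞) with hM
  have hsum0 : Summable (fun l => ‖G l (F x l)‖₊) := by
    have := hsumN 0
    simpa [hy.1] using this
  have hMtop : M ≠ ⊤ := by
    rw [hM, ← ENNReal.coe_tsum hsum0]
    exact ENNReal.coe_ne_top
  -- key upper bound
  have hbound : ∀ n, (‖y n‖₊ : ℝ≥0∞) ≤ r ^ n * M := by
    intro n
    have h1 : (‖y n‖₊ : ℝ≥0∞) ≤ ∑' l, (‖G l (F (y n) l)‖₊ : ℝ≥0∞) := by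
      rw [← ENNReal.coe_tsum (hsumN n), ENNReal.coe_le_coe, ← NNReal.coe_le_coe,
        NNReal.coe_tsum]
      push_cast
      have heq := (hA2 ⟨y n, hmem n⟩).2.tsum_eq
      simp only [LinearPMap.mk_apply] at heq
      calc ‖y n‖ = ‖∑' l, G l (F (y n) l)‖ := by rw [heq]
        _ ≤ ∑' l, ‖G l (F (y n) l)‖ := norm_tsum_le_tsum_norm (hA2 ⟨y n, hmem n⟩).1
    refine h1.trans ?_
    rw [hM, ← ENNReal.tsum_mul_left]
    refine ENNReal.tsum_le_tsum fun l => ?_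
    by_cases hl : l ∈ S
    · have hG : G l (F (y n) l) = (a l)^n • G l (F x l) := by rw [hF n l, map_smul]
      rw [hG, nnnorm_smul, ENNReal.coe_mul, nnnorm_pow, ENNReal.coe_pow]
      exact mul_le_mul_left
        (pow_le_pow_left' (le_iSup₂ (f := fun l (_ : l ∈ S) => (‖a l‖₊ : ℝ≥0∞)) l hl) n) _
    · have hFl : F x l = 0 := not_not.1 hl
      simp [hF n l, hFl]
  set f : ℕ → ℝ≥0∞ := fun n => (‖y n‖₊ : ℝ≥0∞) ^ (1/(n:ℝ)) with hfdef
  -- degenerate case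
  by_cases hM0 : M = 0
  · have hy0 : ∀ n, (‖y n‖₊ : ℝ≥0∞) = 0 := fun n =>
      le_antisymm (by simpa [hM0] using hbound n) zero_le
    have : Tendsto (fun _ : ℕ => (0 : ℝ≥0∞)) atTop (𝓝 r) := by
      have hG0 : ∀ l, G l (F x l) = 0 := by
        intro l
        have h := ENNReal.tsum_eq_zero.mp (hM ▸ hM0) l
        simpa using h
      have hx0 : x ∈ T.domain := hy.1 ▸ hmem 0
      have hx00 : x = 0 := by
        have h := (hA2 ⟨x, hx0⟩).2
        have h0 : HasSum (fun _ : Λ => (0 : X)) x := by simpa [hG0] using h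
        exact h0.unique hasSum_zero
      have hSe : S = ∅ := by
        ext l
        simp [hS, hx00]
      have hr0 : r = 0 := by
        rw [hr, hSe]
        simp
      rw [hr0]; exact tendsto_const_nhds
    refine this.congr' ?_
    filter_upwards [eventually_ge_atTop 1] with n hn
    have hn' : (0:ℝ) < 1/(n:ℝ) := by positivity
    rw [hfdef]
    simp only [hy0 n]
    rw [ENNReal.zero_rpow_of_pos hn']
  -- main case
  have hub : ∀ᶠ n : ℕ in atTop, f n ≤ r * M ^ (1/(n:ℝ)) := by
    filter_upwards [eventually_ge_atTop 1] with n hn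
    have hn' : ((n:ℝ)) ≠ 0 := Nat.cast_ne_zero.mpr (by omega)
    have h1 : f n ≤ (r^n * M) ^ (1/(n:ℝ)) :=
      ENNReal.rpow_le_rpow (hbound n) (by positivity)
    refine h1.trans_eq ?_
    rw [ENNReal.mul_rpow_of_nonneg _ _ (by positivity), ← ENNReal.rpow_natCast r,
      ← ENNReal.rpow_mul, mul_one_div_cancel hn', ENNReal.rpow_one]
  have hg : Tendsto (fun n : ℕ => r * M ^ (1/(n:ℝ))) atTop (𝓝 r) := by
    have h := ENNReal.Tendsto.const_mul (a := r) (b := 1)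
      (aux_rpow_tendsto M hM0 hMtop) (Or.inl one_ne_zero)
    simpa using h
  have hlimsup : limsup f atTop ≤ r :=
    (limsup_le_limsup hub).trans hg.limsup_eq.le
  -- lower bound
  have hlb : ∀ l ∈ S, (‖a l‖₊ : ℝ≥0∞) ≤ liminf f atTop := by
    intro l hl
    have hφ : Continuous ⇑(((LinearMap.proj l).comp F).comp (Te.domain.subtype)) := hA1 l
    have hbd : ∃ C : ℝ, 0 < C ∧ ∀ v : Te.domain, ‖F (v : X) l‖ ≤ C * ‖v‖ := by
      obtain ⟨C, hC, hCb⟩ := SemilinearMapClass.bound_of_continuous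
        (((LinearMap.proj l).comp F).comp (Te.domain.subtype)) hφ
      exact ⟨C, hC, fun v => by simpa using hCb v⟩
    obtain ⟨C, hC, hCb⟩ := hbd
    set C' : NNReal := C.toNNReal with hC'
    have hC'0 : (C' : ℝ≥0∞) ≠ 0 := by
      simp [hC', Real.toNNReal_eq_zero, not_le, hC]
    have hC'top : (C' : ℝ≥0∞) ≠ ⊤ := ENNReal.coe_ne_top
    set d : ℝ≥0∞ := (‖F x l‖₊ : ℝ≥0∞) / (C' : ℝ≥0∞) with hd
    have hd0 : d ≠ 0 := by
      rw [hd]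
      exact (ENNReal.div_pos (by simpa [hS] using hl) hC'top).ne'
    have hdtop : d ≠ ⊤ := by
      rw [hd]
      exact (ENNReal.div_lt_top ENNReal.coe_ne_top hC'0).ne
    have hkey : ∀ n, (‖a l‖₊ : ℝ≥0∞)^n * d ≤ (‖y n‖₊ : ℝ≥0∞) := by
      intro n
      have h := hCb ⟨y n, hmemE n⟩
      simp only [LinearMap.coe_comp, Function.comp_apply, Submodule.coe_subtype,
        LinearMap.proj_apply] at h
      rw [hF n l, norm_smul, norm_pow] at h
      have h2 : (‖a l‖₊ : ℝ≥0∞)^n * (‖F x l‖₊ : ℝ≥0∞) ≤ (C' : ℝ≥0∞) * ‖y n‖₊ := by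
        calc (‖a l‖₊ : ℝ≥0∞)^n * (‖F x l‖₊ : ℝ≥0∞)
            = ENNReal.ofReal (‖a l‖^n * ‖F x l‖) := by
              rw [ENNReal.ofReal_mul (by positivity), ENNReal.ofReal_pow (norm_nonneg _),
                ofReal_norm, ofReal_norm, enorm_eq_nnnorm, enorm_eq_nnnorm]
          _ ≤ ENNReal.ofReal (C * ‖y n‖) := ENNReal.ofReal_le_ofReal h
          _ = (C' : ℝ≥0∞) * ‖y n‖₊ := by
              rw [ENNReal.ofReal_mul hC.le, ofReal_norm]
              rfl
      have h3 := ENNReal.div_le_div_right h2 (C' : ℝ≥0∞)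
      rwa [mul_div_assoc ((C' : ℝ≥0∞)), ENNReal.mul_div_cancel hC'0 hC'top,
        mul_div_assoc, ← hd] at h3
    have hfl : ∀ᶠ n : ℕ in atTop, (‖a l‖₊ : ℝ≥0∞) * d ^ (1/(n:ℝ)) ≤ f n := by
      filter_upwards [eventually_ge_atTop 1] with n hn
      have hn' : ((n:ℝ)) ≠ 0 := Nat.cast_ne_zero.mpr (by omega)
      have h1 : ((‖a l‖₊ : ℝ≥0∞)^n * d) ^ (1/(n:ℝ)) ≤ f n :=
        ENNReal.rpow_le_rpow (hkey n) (by positivity)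
      refine le_trans (le_of_eq ?_) h1
      rw [ENNReal.mul_rpow_of_nonneg _ _ (by positivity), ← ENNReal.rpow_natCast _ n,
        ← ENNReal.rpow_mul, mul_one_div_cancel hn', ENNReal.rpow_one]
    have hgl : Tendsto (fun n : ℕ => (‖a l‖₊ : ℝ≥0∞) * d ^ (1/(n:ℝ))) atTop
        (𝓝 (‖a l‖₊ : ℝ≥0∞)) := by
      have h := ENNReal.Tendsto.const_mul (a := (‖a l‖₊ : ℝ≥0∞)) (b := 1)
        (aux_rpow_tendsto d hd0 hdtop) (Or.inl one_ne_zero)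
      simpa using h
    calc (‖a l‖₊ : ℝ≥0∞)
        = liminf (fun n : ℕ => (‖a l‖₊ : ℝ≥0∞) * d ^ (1/(n:ℝ))) atTop := hgl.liminf_eq.symm
      _ ≤ liminf f atTop := liminf_le_liminf hfl
  have hliminf : r ≤ liminf f atTop := iSup₂_le hlb
  have hll : liminf f atTop ≤ limsup f atTop := liminf_le_limsup
  exact tendsto_of_liminf_eq_limsup
    (le_antisymm (hll.trans hlimsup) hliminf)
    (le_antisymm hlimsup (hliminf.trans hll))
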